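/- (Lemma 2, part (prop_6.1).) Fix a segmentation R : P → Fin m and ε_ν ∈ (0,1). For each n and each admissible pair (ν_d, ν_u), let μ̂_n(ν_d, ν_u) ∈ Θ(R) be a maximizer of μ ↦ Σ_{t=⌊n·ν_d⌋+1}^{⌊n·ν_u⌋} l((R,μ); X_t) over Θ(R), and let μ* ∈ Θ(R) be a maximizer of μ ↦ L(R,μ) over Θ(R). Then almost surely, sup over all admissible pairs (ν_d, ν_u) of | (1/n)·Σ_{t=⌊n·ν_d⌋+1}^{⌊n·ν_u⌋} l((R, μ̂_n(ν_d,ν_u)); X_t) − (ν_u − ν_d)·L(R,μ*) | → 0 as n → ∞. -/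

import Mathlib

open MeasureTheory ProbabilityTheory Filter Topology
open scoped ENNReal NNReal Nat

/-- The reduced Poisson log-likelihood of a count array `x` under segmentation `R`
and rates `μ`: `l((R,μ); x) = Σ_w Σ_i (x(i,w)·log μ(R i, w) − μ(R i, w))`. -/
noncomputable def loglik {NI NW m : ℕ} (R : Fin NI → Fin m)
    (μ : Fin m × Fin NW → ℝ) (x : Fin NI × Fin NW → ℕ) : ℝ :=
  ∑ w : Fin NW, ∑ i : Fin NI, ((x (i, w) : ℝ) * Real.log (μ (R i, w)) - μ (R i, w))

/-- Gradient of `l((R,μ); x)` in `μ`: its `(h,w)` entry is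
`Σ_{i : R i = h} (x(i,w)/μ(h,w) − 1)`. -/
noncomputable def loglikGrad {NI NW m : ℕ} (R : Fin NI → Fin m)
    (μ : Fin m × Fin NW → ℝ) (x : Fin NI × Fin NW → ℕ) :
    Fin m × Fin NW → ℝ :=
  fun hw => ∑ i : Fin NI,
    if R i = hw.1 then ((x (i, hw.2) : ℝ) / μ hw - 1) else 0

/-- Diagonal of the Hessian of `l((R,μ); x)` in `μ`: its `(h,w)` entry is
`−Σ_{i : R i = h} x(i,w)/μ(h,w)²`. -/
noncomputable def loglikHess {NI NW m : ℕ} (R : Fin NI → Fin m)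
    (μ : Fin m × Fin NW → ℝ) (x : Fin NI × Fin NW → ℕ) :
    Fin m × Fin NW → ℝ :=
  fun hw => -∑ i : Fin NI,
    if R i = hw.1 then (x (i, hw.2) : ℝ) / (μ hw) ^ 2 else 0

/-- The expected log-likelihood `L(R,μ)` when the true per-pixel rates are
`λ°(i,w) = μ°(R° i, w)`. -/
noncomputable def expLoglik {NI NW m0 m : ℕ} (R0 : Fin NI → Fin m0)
    (μ0 : Fin m0 × Fin NW → ℝ) (R : Fin NI → Fin m) (μ : Fin m × Fin NW → ℝ) : ℝ :=
  ∑ w : Fin NW, ∑ i : Fin NI, (μ0 (R0 i, w) * Real.log (μ (R i, w)) - μ (R i, w))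

/-- Gradient of `L(R,μ)` in `μ`. -/
noncomputable def expLoglikGrad {NI NW m0 m : ℕ} (R0 : Fin NI → Fin m0)
    (μ0 : Fin m0 × Fin NW → ℝ) (R : Fin NI → Fin m) (μ : Fin m × Fin NW → ℝ) :
    Fin m × Fin NW → ℝ :=
  fun hw => ∑ i : Fin NI,
    if R i = hw.1 then (μ0 (R0 i, hw.2) / μ hw - 1) else 0

/-- Diagonal of the Hessian of `L(R,μ)` in `μ`. -/
noncomputable def expLoglikHess {NI NW m0 m : ℕ} (R0 : Fin NI → Fin m0)
    (μ0 : Fin m0 × Fin NW → ℝ) (R : Fin NI → Fin m) (μ : Fin m × Fin NW → ℝ) :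
    Fin m × Fin NW → ℝ :=
  fun hw => -∑ i : Fin NI,
    if R i = hw.1 then μ0 (R0 i, hw.2) / (μ hw) ^ 2 else 0

/-- The compact parameter box `Θ(R) = [C_d, C_u]^(Fin m × Fin N_W)`. -/
def Theta (Cd Cu : ℝ) (m NW : ℕ) : Set (Fin m × Fin NW → ℝ) :=
  {μ | ∀ p, μ p ∈ Set.Icc Cd Cu}

/-- An admissible pair of normalized endpoints: `0 ≤ ν_d < ν_u ≤ 1` with
`ν_u − ν_d > ε_ν`. -/
def AdmPair (epsnu : ℝ) : Type :=
  {q : ℝ × ℝ // 0 ≤ q.1 ∧ q.1 < q.2 ∧ q.2 ≤ 1 ∧ epsnu < q.2 - q.1}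


section AuxLemmas
open scoped ENNReal NNReal Nat
open Real

open MeasureTheory ProbabilityTheory Filter Topology Real
open scoped ENNReal NNReal Nat

lemma poissonPMF_apply (r : ℝ≥0) (n : ℕ) :
    poissonPMF r n = ENNReal.ofReal (poissonPMFReal r n) := rfl

lemma hasSum_poisson_mean (r : ℝ≥0) :
    HasSum (fun n : ℕ => poissonPMFReal r n * n) r := by
  have h1 : HasSum (fun n : ℕ => (r : ℝ) * poissonPMFReal r n) r := by
    have := (poissonPMFRealSum r).mul_left (r : ℝ); rw [mul_one] at this; exact this
  have h2 : (fun n : ℕ => poissonPMFReal r (n + 1) * ((n + 1 : ℕ) : ℝ)) =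
      fun n : ℕ => (r : ℝ) * poissonPMFReal r n := by
    ext n
    unfold poissonPMFReal
    rw [Nat.factorial_succ]
    have hn : ((n : ℝ) + 1) ≠ 0 := by positivity
    have hf : ((n ! : ℕ) : ℝ) ≠ 0 := Nat.cast_ne_zero.mpr n.factorial_ne_zero
    push_cast
    field_simp
    ring
  have h3 : HasSum (fun n : ℕ => poissonPMFReal r (n + 1) * ((n + 1 : ℕ) : ℝ)) r := by
    rw [h2]; exact h1
  have h4 := (hasSum_nat_add_iff (f := fun n : ℕ => poissonPMFReal r n * (n : ℝ)) 1).mp h3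
  simpa using h4

lemma poisson_integrable (r : ℝ≥0) :
    Integrable (fun n : ℕ => (n : ℝ)) (poissonMeasure r) := by
  constructor
  · exact measurable_from_nat.aestronglyMeasurable
  · show (∫⁻ n : ℕ, (‖(n : ℝ)‖₊ : ℝ≥0∞) ∂(poissonMeasure r)) < ⊤
    rw [lintegral_countable']
    have heq : ∀ n : ℕ, (‖(n : ℝ)‖₊ : ℝ≥0∞) * poissonMeasure r {n}
        = ENNReal.ofReal (poissonPMFReal r n * n) := by
      intro n
      rw [show poissonMeasure r {n} = poissonPMF r n from
        (poissonMeasure_singleton r n).trans rfl,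
        poissonPMF_apply]
      rw [show ((‖(n : ℝ)‖₊ : ℝ≥0∞)) = ENNReal.ofReal (n : ℝ) by
        simp [Real.nnnorm_natCast, ENNReal.ofReal_natCast]]
      rw [← ENNReal.ofReal_mul (Nat.cast_nonneg n)]
      rw [mul_comm ((n:ℝ))]
    simp_rw [heq]
    rw [← ENNReal.ofReal_tsum_of_nonneg (fun n => mul_nonneg poissonPMFReal_nonneg (Nat.cast_nonneg n))
      (hasSum_poisson_mean r).summable]
    exact ENNReal.ofReal_lt_top

lemma poisson_mean (r : ℝ≥0) :
    ∫ n : ℕ, (n : ℝ) ∂(poissonMeasure r) = r := by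
  rw [integral_poissonMeasure' (poisson_integrable r)]
  have h : ∀ n : ℕ, (Real.exp (-r) * r ^ n / (n)!) • (n : ℝ) = poissonPMFReal r n * n := by
    intro n
    rw [smul_eq_mul]; rfl
  simp_rw [h]
  exact (hasSum_poisson_mean r).tsum_eq


end AuxLemmas

lemma sum_loglik_sub {NI NW m0 m : ℕ} (R0 : Fin NI → Fin m0)
    (μ0 : Fin m0 × Fin NW → ℝ) (R : Fin NI → Fin m)
    (μ : Fin m × Fin NW → ℝ) (T : Finset ℕ) (f : ℕ → Fin NI × Fin NW → ℕ) :
    (∑ t ∈ T, loglik R μ (f t)) - (T.card : ℝ) * expLoglik R0 μ0 R μ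
      = ∑ w : Fin NW, ∑ i : Fin NI,
          ((∑ t ∈ T, (f t (i, w) : ℝ)) - (T.card : ℝ) * μ0 (R0 i, w))
            * Real.log (μ (R i, w)) := by
  simp only [loglik, expLoglik]
  rw [Finset.sum_comm (s := T)]
  rw [Finset.mul_sum, ← Finset.sum_sub_distrib]
  refine Finset.sum_congr rfl fun w _ => ?_
  rw [Finset.sum_comm (s := T)]
  rw [Finset.mul_sum, ← Finset.sum_sub_distrib]
  refine Finset.sum_congr rfl fun i _ => ?_
  rw [Finset.sum_sub_distrib, ← Finset.sum_mul, Finset.sum_const, nsmul_eq_mul]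
  ring

lemma abs_sum_loglik_sub_le {NI NW m0 m : ℕ} {Cd Cu : ℝ} (hCd : 0 < Cd)
    (R0 : Fin NI → Fin m0) (μ0 : Fin m0 × Fin NW → ℝ) (R : Fin NI → Fin m)
    {μ : Fin m × Fin NW → ℝ} (hμ : μ ∈ Theta Cd Cu m NW)
    (T : Finset ℕ) (f : ℕ → Fin NI × Fin NW → ℕ) :
    |(∑ t ∈ T, loglik R μ (f t)) - (T.card : ℝ) * expLoglik R0 μ0 R μ|
      ≤ (max |Real.log Cd| |Real.log Cu|) *
          ∑ p : Fin NI × Fin NW,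
            |(∑ t ∈ T, (f t p : ℝ)) - (T.card : ℝ) * μ0 (R0 p.1, p.2)| := by
  rw [sum_loglik_sub]
  set M := max |Real.log Cd| |Real.log Cu| with hM
  calc |∑ w : Fin NW, ∑ i : Fin NI,
          ((∑ t ∈ T, (f t (i, w) : ℝ)) - (T.card : ℝ) * μ0 (R0 i, w))
            * Real.log (μ (R i, w))|
      ≤ ∑ w : Fin NW, ∑ i : Fin NI,
          |((∑ t ∈ T, (f t (i, w) : ℝ)) - (T.card : ℝ) * μ0 (R0 i, w))
            * Real.log (μ (R i, w))| := by
        refine (Finset.abs_sum_le_sum_abs _ _).trans ?_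
        exact Finset.sum_le_sum fun w _ => Finset.abs_sum_le_sum_abs _ _
    _ ≤ ∑ w : Fin NW, ∑ i : Fin NI,
          |(∑ t ∈ T, (f t (i, w) : ℝ)) - (T.card : ℝ) * μ0 (R0 i, w)| * M := by
        refine Finset.sum_le_sum fun w _ => Finset.sum_le_sum fun i _ => ?_
        rw [abs_mul]
        refine mul_le_mul_of_nonneg_left ?_ (abs_nonneg _)
        have h1 := (hμ (R i, w)).1
        have h2 := (hμ (R i, w)).2
        exact abs_le_max_abs_abs (Real.log_le_log hCd h1)
          (Real.log_le_log (lt_of_lt_of_le hCd h1) h2)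
    _ = M * ∑ p : Fin NI × Fin NW,
          |(∑ t ∈ T, (f t p : ℝ)) - (T.card : ℝ) * μ0 (R0 p.1, p.2)| := by
        rw [Finset.mul_sum, Fintype.sum_prod_type, Finset.sum_comm]
        simp [mul_comm]

lemma range_nonempty' (n : ℕ) : (Finset.range (n + 2)).Nonempty :=
  ⟨0, Finset.mem_range.mpr (by omega)⟩

lemma sup_div_tendsto (g : ℕ → ℝ) (hg0 : ∀ k, 0 ≤ g k)
    (hg : Tendsto (fun k => g k / k) atTop (𝓝 0)) :
    Tendsto (fun n : ℕ => ((Finset.range (n + 2)).sup' (range_nonempty' n) g) / n)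
      atTop (𝓝 0) := by
  rw [Metric.tendsto_atTop] at hg ⊢
  intro ε hε
  obtain ⟨K, hK⟩ := hg (ε / 4) (by positivity)
  set A := (Finset.range (K + 1)).sup' ⟨0, Finset.mem_range.mpr (by omega)⟩ g with hA
  obtain ⟨N0, hN0⟩ := exists_nat_gt (4 * A / ε)
  refine ⟨max (K + 1) (N0 + 1), fun n hn => ?_⟩
  have hnK : K + 1 ≤ n := le_trans (le_max_left _ _) hn
  have hnN0 : (4 * A / ε) < n := lt_of_lt_of_le hN0 (by
    exact_mod_cast le_trans (le_trans (Nat.le_succ _) (le_max_right (K+1) (N0+1))) hn)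
  have hn1 : 1 ≤ n := by omega
  have hnpos : (0 : ℝ) < n := by exact_mod_cast hn1
  have hbound : ∀ k ∈ Finset.range (n + 2), g k ≤ ε / 2 * n := by
    intro k hk
    have hk' : k ≤ n + 1 := by simpa [Nat.lt_succ_iff] using Finset.mem_range.mp hk
    by_cases hkK : k ≤ K
    · have h1 : g k ≤ A :=
        Finset.le_sup' g (Finset.mem_range.mpr (by omega))
      have h2 : A ≤ ε / 4 * n := by
        rw [div_lt_iff₀ hε] at hnN0
        nlinarith
      nlinarith
    · push_neg at hkK
      have hkpos : (0 : ℝ) < k := by exact_mod_cast Nat.lt_of_le_of_lt (Nat.zero_le _) hkK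
      have := hK k (by omega)
      rw [Real.dist_eq, sub_zero, abs_of_nonneg (div_nonneg (hg0 k) (le_of_lt hkpos))] at this
      have hgk : g k < ε / 4 * k := by
        rw [div_lt_iff₀ hkpos] at this; linarith
      have hkn : (k : ℝ) ≤ 2 * n := by
        have h3 : (k : ℝ) ≤ (n : ℝ) + 1 := by exact_mod_cast hk'
        have h4 : (1:ℝ) ≤ n := by exact_mod_cast hn1
        linarith
      nlinarith
  have hsup : (Finset.range (n + 2)).sup' (range_nonempty' n) g ≤ ε / 2 * n :=
    Finset.sup'_le _ _ hbound
  have hsupnn : 0 ≤ (Finset.range (n + 2)).sup' (range_nonempty' n) g :=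
    le_trans (hg0 0) (Finset.le_sup' g (Finset.mem_range.mpr (by omega)))
  rw [Real.dist_eq, sub_zero, abs_of_nonneg (div_nonneg hsupnn (le_of_lt hnpos))]
  rw [div_lt_iff₀ hnpos]
  nlinarith

set_option maxHeartbeats 1000000 in
lemma deterministic_main {NI NW m0 m : ℕ} {Cd Cu : ℝ} (hCd : 0 < Cd)
    {epsnu : ℝ} (hepsnu : 0 < epsnu ∧ epsnu < 1)
    (R0 : Fin NI → Fin m0) (μ0 : Fin m0 × Fin NW → ℝ)
    (R : Fin NI → Fin m)
    (f : ℕ → Fin NI × Fin NW → ℕ)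
    (hf : ∀ p : Fin NI × Fin NW, Tendsto
      (fun n : ℕ => (∑ t ∈ Finset.range n, (f t p : ℝ)) / n) atTop
      (𝓝 (μ0 (R0 p.1, p.2))))
    (μh : ℕ → AdmPair epsnu → (Fin m × Fin NW → ℝ))
    (hmem : ∀ n q, μh n q ∈ Theta Cd Cu m NW)
    (hmax : ∀ (n : ℕ) (q : AdmPair epsnu), ∀ μ ∈ Theta Cd Cu m NW,
      ∑ t ∈ Finset.Ioc ⌊(n : ℝ) * q.1.1⌋₊ ⌊(n : ℝ) * q.1.2⌋₊, loglik R μ (f t)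
        ≤ ∑ t ∈ Finset.Ioc ⌊(n : ℝ) * q.1.1⌋₊ ⌊(n : ℝ) * q.1.2⌋₊, loglik R (μh n q) (f t))
    (μstar : Fin m × Fin NW → ℝ) (hμstar_mem : μstar ∈ Theta Cd Cu m NW)
    (hμstar_max : ∀ μ ∈ Theta Cd Cu m NW,
      expLoglik R0 μ0 R μ ≤ expLoglik R0 μ0 R μstar) :
    Tendsto (fun n : ℕ => ⨆ q : AdmPair epsnu,
      |(1 / (n : ℝ)) * ∑ t ∈ Finset.Ioc ⌊(n : ℝ) * q.1.1⌋₊ ⌊(n : ℝ) * q.1.2⌋₊,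
          loglik R (μh n q) (f t) - (q.1.2 - q.1.1) * expLoglik R0 μ0 R μstar|)
      atTop (𝓝 0) := by
  haveI : Nonempty (AdmPair epsnu) :=
    ⟨⟨(0, 1), le_refl 0, by norm_num, le_refl 1, by simpa using hepsnu.2⟩⟩
  set Lstar := expLoglik R0 μ0 R μstar with hLstar
  set M := max |Real.log Cd| |Real.log Cu| with hMdef
  have hM0 : 0 ≤ M := le_trans (abs_nonneg _) (le_max_left _ _)
  set g : ℕ → ℝ := fun k => ∑ p : Fin NI × Fin NW,
    |(∑ t ∈ Finset.range k, (f t p : ℝ)) - (k : ℝ) * μ0 (R0 p.1, p.2)| with hgdef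
  have hg0 : ∀ k, 0 ≤ g k := fun k => Finset.sum_nonneg fun p _ => abs_nonneg _
  -- g k / k → 0
  have hgdiv : Tendsto (fun k : ℕ => g k / k) atTop (𝓝 0) := by
    have hper : ∀ p : Fin NI × Fin NW, Tendsto
        (fun k : ℕ => |(∑ t ∈ Finset.range k, (f t p : ℝ)) / k - μ0 (R0 p.1, p.2)|)
        atTop (𝓝 0) := by
      intro p
      have h := ((hf p).sub (tendsto_const_nhds (x := μ0 (R0 p.1, p.2)))).abs
      simpa using h
    have hsum := tendsto_finset_sum Finset.univ
      (fun p (_ : p ∈ Finset.univ) => hper p)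
    rw [Finset.sum_const, smul_zero] at hsum
    refine Tendsto.congr' ?_ hsum
    filter_upwards [eventually_ge_atTop 1] with k hk
    have hkpos : (0 : ℝ) < k := by exact_mod_cast hk
    rw [hgdef, Finset.sum_div]
    refine Finset.sum_congr rfl fun p _ => ?_
    rw [eq_comm, ← abs_of_pos hkpos, ← abs_div, abs_of_pos hkpos]
    congr 1
    field_simp
  -- the uniform bound
  set G : ℕ → ℝ := fun n => (Finset.range (n + 2)).sup' (range_nonempty' n) g with hGdef
  set C : ℕ → ℝ := fun n => M * 2 * (G n / n) + 2 * |Lstar| * (1 / n) with hCdef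
  have key : ∀ n : ℕ, 1 ≤ n → ∀ q : AdmPair epsnu,
      |(1 / (n : ℝ)) * ∑ t ∈ Finset.Ioc ⌊(n : ℝ) * q.1.1⌋₊ ⌊(n : ℝ) * q.1.2⌋₊,
          loglik R (μh n q) (f t) - (q.1.2 - q.1.1) * Lstar| ≤ C n := by
    intro n hn q
    have hnpos : (0 : ℝ) < n := by exact_mod_cast hn
    obtain ⟨hq1, hq2, hq3, hq4⟩ := q.2
    set νd := q.1.1 with hνd
    set νu := q.1.2 with hνu
    set a := ⌊(n : ℝ) * νd⌋₊ with hadef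
    set b := ⌊(n : ℝ) * νu⌋₊ with hbdef
    have hab : a ≤ b := Nat.floor_le_floor (by nlinarith)
    have hbn : b ≤ n := by
      have h1 : (n : ℝ) * νu ≤ (n : ℝ) := by nlinarith
      calc b ≤ ⌊(n : ℝ)⌋₊ := Nat.floor_le_floor h1
        _ = n := Nat.floor_natCast n
    have hcard : ((Finset.Ioc a b).card : ℝ) = (b : ℝ) - (a : ℝ) := by
      rw [Nat.card_Ioc]
      exact Nat.cast_sub hab
    have hflo_a1 : (a : ℝ) ≤ (n : ℝ) * νd := Nat.floor_le (by positivity)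
    have hflo_a2 : (n : ℝ) * νd < (a : ℝ) + 1 := Nat.lt_floor_add_one _
    have hflo_b1 : (b : ℝ) ≤ (n : ℝ) * νu := Nat.floor_le (by nlinarith)
    have hflo_b2 : (n : ℝ) * νu < (b : ℝ) + 1 := Nat.lt_floor_add_one _
    have hpix : ∀ p : Fin NI × Fin NW,
        |(∑ t ∈ Finset.Ioc a b, (f t p : ℝ)) - ((Finset.Ioc a b).card : ℝ) * μ0 (R0 p.1, p.2)|
          ≤ |(∑ t ∈ Finset.range (b + 1), (f t p : ℝ)) - (((b : ℕ) + 1 : ℕ) : ℝ) * μ0 (R0 p.1, p.2)|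
            + |(∑ t ∈ Finset.range (a + 1), (f t p : ℝ)) - (((a : ℕ) + 1 : ℕ) : ℝ) * μ0 (R0 p.1, p.2)| := by
      intro p
      have hsplit : (∑ t ∈ Finset.Ioc a b, (f t p : ℝ))
          = (∑ t ∈ Finset.range (b + 1), (f t p : ℝ))
            - (∑ t ∈ Finset.range (a + 1), (f t p : ℝ)) := by
        rw [← Finset.Ico_add_one_add_one_eq_Ioc, Finset.sum_Ico_eq_sub _ (Nat.add_le_add_right hab 1)]
      rw [hsplit, hcard]
      have heq : (∑ t ∈ Finset.range (b + 1), (f t p : ℝ))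
            - (∑ t ∈ Finset.range (a + 1), (f t p : ℝ))
            - ((b : ℝ) - (a : ℝ)) * μ0 (R0 p.1, p.2)
          = ((∑ t ∈ Finset.range (b + 1), (f t p : ℝ)) - (((b : ℕ) + 1 : ℕ) : ℝ) * μ0 (R0 p.1, p.2))
            - ((∑ t ∈ Finset.range (a + 1), (f t p : ℝ)) - (((a : ℕ) + 1 : ℕ) : ℝ) * μ0 (R0 p.1, p.2)) := by
        push_cast
        ring
      rw [heq]
      exact abs_sub _ _
    have hsumpix : ∑ p : Fin NI × Fin NW,
        |(∑ t ∈ Finset.Ioc a b, (f t p : ℝ)) - ((Finset.Ioc a b).card : ℝ) * μ0 (R0 p.1, p.2)|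
          ≤ g (b + 1) + g (a + 1) := by
      refine le_trans (Finset.sum_le_sum fun p _ => hpix p) ?_
      rw [Finset.sum_add_distrib]
    have hGb : g (b + 1) ≤ G n :=
      Finset.le_sup' g (Finset.mem_range.mpr (by omega))
    have hGa : g (a + 1) ≤ G n :=
      Finset.le_sup' g (Finset.mem_range.mpr (by omega))
    have hΔ : ∀ μ ∈ Theta Cd Cu m NW,
        |(∑ t ∈ Finset.Ioc a b, loglik R μ (f t))
            - ((Finset.Ioc a b).card : ℝ) * expLoglik R0 μ0 R μ|
          ≤ M * (2 * G n) := by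
      intro μ hμ
      refine le_trans (abs_sum_loglik_sub_le hCd R0 μ0 R hμ _ f) ?_
      refine mul_le_mul_of_nonneg_left ?_ hM0
      refine le_trans hsumpix ?_
      linarith
    have hcard0 : (0 : ℝ) ≤ ((Finset.Ioc a b).card : ℝ) := Nat.cast_nonneg _
    have h1 := abs_le.mp (hΔ (μh n q) (hmem n q))
    have h2 := abs_le.mp (hΔ μstar hμstar_mem)
    rw [← hLstar] at h2
    have h3 : (∑ t ∈ Finset.Ioc a b, loglik R μstar (f t))
        ≤ ∑ t ∈ Finset.Ioc a b, loglik R (μh n q) (f t) := hmax n q μstar hμstar_mem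
    have h4 : expLoglik R0 μ0 R (μh n q) ≤ Lstar := hμstar_max (μh n q) (hmem n q)
    have h5 : ((Finset.Ioc a b).card : ℝ) * expLoglik R0 μ0 R (μh n q)
        ≤ ((Finset.Ioc a b).card : ℝ) * Lstar := mul_le_mul_of_nonneg_left h4 hcard0
    have hB : |(∑ t ∈ Finset.Ioc a b, loglik R (μh n q) (f t))
        - ((Finset.Ioc a b).card : ℝ) * Lstar| ≤ M * (2 * G n) := by
      rw [abs_le]
      constructor
      · linarith [h2.1]
      · linarith [h1.2]
    have hcb : |((Finset.Ioc a b).card : ℝ) - (n : ℝ) * (νu - νd)| ≤ 2 := by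
      rw [hcard, abs_le]
      have hdist : (n : ℝ) * (νu - νd) = (n : ℝ) * νu - (n : ℝ) * νd := by ring
      constructor <;> [linarith; linarith]
    have expand : (1 / (n : ℝ)) * (∑ t ∈ Finset.Ioc a b, loglik R (μh n q) (f t))
          - (νu - νd) * Lstar
        = (1 / (n : ℝ)) * ((∑ t ∈ Finset.Ioc a b, loglik R (μh n q) (f t))
            - ((Finset.Ioc a b).card : ℝ) * Lstar)
          + (1 / (n : ℝ)) * ((((Finset.Ioc a b).card : ℝ)) - (n : ℝ) * (νu - νd)) * Lstar := by
      field_simp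
      ring
    rw [expand]
    refine le_trans (abs_add_le _ _) ?_
    rw [hCdef]
    have e1 : |(1 / (n : ℝ)) * ((∑ t ∈ Finset.Ioc a b, loglik R (μh n q) (f t))
          - ((Finset.Ioc a b).card : ℝ) * Lstar)| ≤ (1 / (n : ℝ)) * (M * (2 * G n)) := by
      rw [abs_mul, abs_of_pos (by positivity : (0:ℝ) < 1 / (n:ℝ))]
      exact mul_le_mul_of_nonneg_left hB (by positivity)
    have e2 : |(1 / (n : ℝ)) * ((((Finset.Ioc a b).card : ℝ)) - (n : ℝ) * (νu - νd)) * Lstar|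
        ≤ (1 / (n : ℝ)) * 2 * |Lstar| := by
      rw [abs_mul, abs_mul, abs_of_pos (by positivity : (0:ℝ) < 1 / (n:ℝ))]
      refine mul_le_mul_of_nonneg_right ?_ (abs_nonneg _)
      exact mul_le_mul_of_nonneg_left hcb (by positivity)
    have hsum := add_le_add e1 e2
    refine le_trans hsum (le_of_eq ?_)
    field_simp
  -- squeeze
  refine squeeze_zero' (g := C) ?_ ?_ ?_
  · filter_upwards [eventually_ge_atTop 1] with n hn
    have hbdd : BddAbove (Set.range fun q : AdmPair epsnu =>
        |(1 / (n : ℝ)) * ∑ t ∈ Finset.Ioc ⌊(n : ℝ) * q.1.1⌋₊ ⌊(n : ℝ) * q.1.2⌋₊,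
            loglik R (μh n q) (f t) - (q.1.2 - q.1.1) * Lstar|) := by
      refine ⟨C n, ?_⟩
      rintro x ⟨q, rfl⟩
      exact key n hn q
    exact le_ciSup_of_le hbdd Classical.ofNonempty (abs_nonneg _)
  · filter_upwards [eventually_ge_atTop 1] with n hn
    exact ciSup_le (key n hn)
  · have h1 := (sup_div_tendsto g hg0 hgdiv).const_mul (M * 2)
    have h2 := tendsto_one_div_atTop_nhds_zero_nat.const_mul (2 * |Lstar|)
    have h3 := h1.add h2
    rw [show (M * 2 * 0 + 2 * |Lstar| * 0 : ℝ) = 0 by ring] at h3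
    refine h3.congr fun n => ?_
    rw [hCdef]


/-- Lemma 2, part (prop_6.1): if `μ̂_n(ν_d,ν_u)` maximizes the partial-sum
log-likelihood over `Θ(R)` and `μ*` maximizes `L(R,·)` over `Θ(R)`, then almost
surely, uniformly over all admissible pairs,
`(1/n)·Σ_{t=⌊n ν_d⌋+1}^{⌊n ν_u⌋} l((R,μ̂_n); X_t) → (ν_u − ν_d)·L(R,μ*)`. -/
theorem lemma2_prop_6_1
    {NI NW m0 m : ℕ} (Cd Cu : ℝ) (hCd : 0 < Cd) (hCdCu : Cd ≤ Cu)
    (epsnu : ℝ) (hepsnu : 0 < epsnu ∧ epsnu < 1)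
    (R0 : Fin NI → Fin m0) (hR0surj : ∀ h, ∃ i, R0 i = h)
    (μ0 : Fin m0 × Fin NW → ℝ) (hA1 : ∀ p, μ0 p ∈ Set.Icc Cd Cu)
    (R : Fin NI → Fin m)
    {Ω : Type*} [MeasurableSpace Ω] (Pr : Measure Ω) [IsProbabilityMeasure Pr]
    (X : ℕ → Ω → Fin NI × Fin NW → ℕ)
    (hmeas : ∀ t p, Measurable fun ω => X t ω p)
    (hindep : iIndepFun (fun (q : ℕ × (Fin NI × Fin NW)) ω => X q.1 ω q.2) Pr)
    (hlaw : ∀ t p, Measure.map (fun ω => X t ω p) Pr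
      = poissonMeasure (μ0 (R0 p.1, p.2)).toNNReal)
    -- the (random) maximizer of the partial-sum log-likelihood over Θ(R)
    (μhat : ℕ → AdmPair epsnu → Ω → (Fin m × Fin NW → ℝ))
    (hμhat_mem : ∀ n q ω, μhat n q ω ∈ Theta Cd Cu m NW)
    (hμhat_max : ∀ (n : ℕ) (q : AdmPair epsnu) (ω : Ω),
      ∀ μ ∈ Theta Cd Cu m NW,
        ∑ t ∈ Finset.Ioc ⌊(n : ℝ) * q.1.1⌋₊ ⌊(n : ℝ) * q.1.2⌋₊, loglik R μ (X t ω)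
          ≤ ∑ t ∈ Finset.Ioc ⌊(n : ℝ) * q.1.1⌋₊ ⌊(n : ℝ) * q.1.2⌋₊,
              loglik R (μhat n q ω) (X t ω))
    -- a maximizer of the expected log-likelihood over Θ(R)
    (μstar : Fin m × Fin NW → ℝ) (hμstar_mem : μstar ∈ Theta Cd Cu m NW)
    (hμstar_max : ∀ μ ∈ Theta Cd Cu m NW,
      expLoglik R0 μ0 R μ ≤ expLoglik R0 μ0 R μstar) :
    ∀ᵐ ω ∂Pr,
      Tendsto (fun n : ℕ => ⨆ q : AdmPair epsnu,
        |(1 / (n : ℝ)) * ∑ t ∈ Finset.Ioc ⌊(n : ℝ) * q.1.1⌋₊ ⌊(n : ℝ) * q.1.2⌋₊,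
            loglik R (μhat n q ω) (X t ω)
          - (q.1.2 - q.1.1) * expLoglik R0 μ0 R μstar|) atTop (𝓝 0) :=  by
  have hSLLN : ∀ p : Fin NI × Fin NW, ∀ᵐ ω ∂Pr,
      Tendsto (fun n : ℕ => (∑ t ∈ Finset.range n, (X t ω p : ℝ)) / n) atTop
        (𝓝 (μ0 (R0 p.1, p.2))) := by
    intro p
    set r := (μ0 (R0 p.1, p.2)).toNNReal with hr
    have hrval : ((r : ℝ≥0) : ℝ) = μ0 (R0 p.1, p.2) :=
      Real.coe_toNNReal _ (le_trans hCd.le (hA1 _).1)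
    set Y : ℕ → Ω → ℝ := fun t ω => ((X t ω p : ℕ) : ℝ) with hY
    have hInt : Integrable (Y 0) Pr := by
      have h : Integrable ((fun k : ℕ => (k : ℝ)) ∘ (fun ω => X 0 ω p)) Pr := by
        rw [← integrable_map_measure measurable_from_nat.aestronglyMeasurable
          (hmeas 0 p).aemeasurable, hlaw 0 p]
        exact poisson_integrable r
      exact h
    have hIndepY : Pairwise (Function.onFun (IndepFun · · Pr) Y) := by
      intro t s hts
      have h := hindep.indepFun
        (show ((t, p) : ℕ × (Fin NI × Fin NW)) ≠ (s, p) by simp [hts])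
      exact h.comp measurable_from_nat measurable_from_nat
    have hIdY : ∀ t, IdentDistrib (Y t) (Y 0) Pr Pr := by
      intro t
      have hbase : IdentDistrib (fun ω => X t ω p) (fun ω => X 0 ω p) Pr Pr :=
        ⟨(hmeas t p).aemeasurable, (hmeas 0 p).aemeasurable,
          by rw [hlaw t p, hlaw 0 p]⟩
      exact hbase.comp measurable_from_nat
    have hmean : ∫ ω, Y 0 ω ∂Pr = μ0 (R0 p.1, p.2) := by
      have h : ∫ x : ℕ, (x : ℝ) ∂(Measure.map (fun ω => X 0 ω p) Pr)
          = ∫ ω, Y 0 ω ∂Pr :=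
        integral_map (hmeas 0 p).aemeasurable
          measurable_from_nat.aestronglyMeasurable
      rw [← h, hlaw 0 p, poisson_mean, hrval]
    have hsl := strong_law_ae_real Y hInt hIndepY hIdY
    rw [show (Pr[Y 0]) = μ0 (R0 p.1, p.2) from hmean] at hsl
    exact hsl
  have hae : ∀ᵐ ω ∂Pr, ∀ p : Fin NI × Fin NW,
      Tendsto (fun n : ℕ => (∑ t ∈ Finset.range n, (X t ω p : ℝ)) / n) atTop
        (𝓝 (μ0 (R0 p.1, p.2))) := ae_all_iff.mpr hSLLN
  filter_upwards [hae] with ω hω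
  exact deterministic_main hCd hepsnu R0 μ0 R (fun t => X t ω) hω
    (fun n q => μhat n q ω) (fun n q => hμhat_mem n q ω)
    (fun n q => hμhat_max n q ω) μstar hμstar_mem hμstar_max
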